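/- Let σ : ℕ → ℝ be a sequence of positive random variables and η : ℕ → ℝ a sequence of positive random variables such that for each k, η_k is independent of σ_{k−n+1}, E[η_k²] = c for a constant c, and σ_{k+1} ≥ η_k·σ_{k−n+1} almost surely. If E[σ_k²] → 0 as k → ∞, then c < 1. -/

import Mathlib

open MeasureTheory ProbabilityTheory Filter

theorem mss_necessary_contraction
    {Ω : Type*} [MeasurableSpace Ω] (μ : Measure Ω) [IsProbabilityMeasure μ]
    (n : ℕ) (hn : 1 ≤ n) (σ η : ℕ → Ω → ℝ) (c : ℝ)
    (hσpos : ∀ k, ∀ᵐ ω ∂μ, 0 < σ k ω)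
    (hσint : ∀ k, Integrable (fun ω => (σ k ω)^2) μ)
    (hηint : ∀ k, Integrable (fun ω => (η k ω)^2) μ)
    (hindep : ∀ k, n - 1 ≤ k → IndepFun (η k) (σ (k - (n - 1))) μ)
    (hmom : ∀ k, ∫ ω, (η k ω)^2 ∂μ = c)
    (hrec : ∀ k, n - 1 ≤ k → ∀ᵐ ω ∂μ, η k ω * σ (k - (n - 1)) ω ≤ σ (k + 1) ω)
    (hηpos : ∀ k, ∀ᵐ ω ∂μ, 0 < η k ω)
    (hmss : Tendsto (fun k => ∫ ω, (σ k ω)^2 ∂μ) atTop (nhds 0)) :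
    c < 1 := by
  by_contra hc
  push_neg at hc
  set f : ℕ → ℝ := fun k => ∫ ω, (σ k ω)^2 ∂μ with hf
  -- f is positive
  have fpos : ∀ k, 0 < f k := by
    intro k
    have hpos : ∀ᵐ ω ∂μ, 0 < (σ k ω)^2 :=
      (hσpos k).mono fun ω h => by positivity
    rw [hf]
    rw [integral_pos_iff_support_of_nonneg_ae (hpos.mono fun ω h => le_of_lt h) (hσint k)]
    have hnull : μ (Function.support fun ω => (σ k ω)^2)ᶜ = 0 := by
      apply measure_mono_null _ (ae_iff.mp hpos)
      intro ω hω
      simp only [Function.support, Set.mem_compl_iff, Set.mem_setOf_eq, not_not] at hω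
      simpa using hω
    have h1 : (1 : ENNReal) ≤ μ (Function.support fun ω => (σ k ω)^2) := by
      calc (1 : ENNReal) = μ Set.univ := (measure_univ (μ := μ)).symm
        _ ≤ μ (Function.support fun ω => (σ k ω)^2) +
            μ (Function.support fun ω => (σ k ω)^2)ᶜ := by
              rw [← Set.union_compl_self (Function.support fun ω => (σ k ω)^2)]
              exact measure_union_le _ _
        _ = μ (Function.support fun ω => (σ k ω)^2) := by rw [hnull, add_zero]
    exact lt_of_lt_of_le one_pos h1
  -- key step: f (m + n) ≥ c * f m
  have key : ∀ m, c * f m ≤ f (m + n) := by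
    intro m
    set k := m + (n - 1) with hk
    have hkn : n - 1 ≤ k := Nat.le_add_left _ _
    have hksub : k - (n - 1) = m := by omega
    have hk1 : k + 1 = m + n := by omega
    have hind : IndepFun (fun ω => (η k ω)^2) (fun ω => (σ m ω)^2) μ := by
      have := (hindep k hkn).comp (φ := fun x : ℝ => x^2) (ψ := fun x : ℝ => x^2)
        (measurable_id.pow_const 2) (measurable_id.pow_const 2)
      rwa [hksub] at this
    have hintmul : Integrable (fun ω => (η k ω)^2 * (σ m ω)^2) μ :=
      hind.integrable_mul (hηint k) (hσint m)
    have hmul : ∫ ω, (η k ω)^2 * (σ m ω)^2 ∂μ = c * f m := by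
      have := hind.integral_fun_mul_eq_mul_integral (hηint k).aestronglyMeasurable (hσint m).aestronglyMeasurable
      exact this.trans (by rw [hmom k])
    have hmono : ∀ᵐ ω ∂μ, (η k ω)^2 * (σ m ω)^2 ≤ (σ (k+1) ω)^2 := by
      have h1 := hrec k hkn
      rw [hksub] at h1
      filter_upwards [h1, hηpos k, hσpos m] with ω hle hη hσ
      calc (η k ω)^2 * (σ m ω)^2 = (η k ω * σ m ω)^2 := by ring
        _ ≤ (σ (k+1) ω)^2 := by
            apply pow_le_pow_left₀ (by positivity) hle
    have := integral_mono_ae hintmul (hσint (k+1)) hmono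
    rw [hmul] at this
    rw [hk1] at this
    exact this
  -- f (j * n) ≥ f 0
  have lower : ∀ j, f 0 ≤ f (j * n) := by
    intro j
    induction j with
    | zero => simp
    | succ j ih =>
      have : c * f (j * n) ≤ f (j * n + n) := key (j * n)
      have h2 : f (j * n) ≤ c * f (j * n) :=
        le_mul_of_one_le_left (fpos _).le hc
      have : f (j * n) ≤ f ((j+1) * n) := by
        rw [add_mul, one_mul]; exact h2.trans this
      exact ih.trans this
  -- contradiction with convergence to 0
  have htend : Tendsto (fun j => f (j * n)) atTop (nhds 0) := by
    apply hmss.comp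
    exact tendsto_atTop_mono (fun j => Nat.le_mul_of_pos_right j hn) tendsto_id
  have := htend.eventually (eventually_lt_nhds (fpos 0))
  rcases this.exists with ⟨j, hj⟩
  exact absurd (lower j) (not_le.mpr hj)
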